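/- Closed form with arbitrary PSD initial term: let X₀ = ΓᵀΓ and X_{t+1} = CᵀC + AᵀX_t(I + BBᵀX_t)⁻¹A. With V_t, T_t as in the zero-initial closed form and Υ_t = [A^{t−1}B, …, AB, B], one has X_t = [V_t; ΓA^t]ᵀ (I + [T_t; ΓΥ_t][T_t; ΓΥ_t]ᵀ)⁻¹ [V_t; ΓA^t] for all t ≥ 1. -/

import Mathlib

open Matrix

/-- `V t = [C; CA; …; CA^{t-1}]`, with block row index `Fin t`. -/
def obsMat {n l : ℕ} (A : Matrix (Fin n) (Fin n) ℝ) (C : Matrix (Fin l) (Fin n) ℝ)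
    (t : ℕ) : Matrix (Fin t × Fin l) (Fin n) ℝ :=
  fun a j => (C * A ^ (a.1 : ℕ)) a.2 j

/-- `T t`: block lower-triangular Toeplitz matrix with zero diagonal blocks and
subdiagonal blocks `CB, CAB, …, CA^{t-2}B`. -/
def toepMat {n m l : ℕ} (A : Matrix (Fin n) (Fin n) ℝ) (B : Matrix (Fin n) (Fin m) ℝ)
    (C : Matrix (Fin l) (Fin n) ℝ) (t : ℕ) :
    Matrix (Fin t × Fin l) (Fin t × Fin m) ℝ :=
  fun a b =>
    if (b.1 : ℕ) < (a.1 : ℕ) then (C * A ^ ((a.1 : ℕ) - (b.1 : ℕ) - 1) * B) a.2 b.2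
    else 0

/-- `Υ t = [A^{t-1}B, …, AB, B]`, with block column index `Fin t`. -/
def ctrbMat {n m : ℕ} (A : Matrix (Fin n) (Fin n) ℝ) (B : Matrix (Fin n) (Fin m) ℝ)
    (t : ℕ) : Matrix (Fin n) (Fin t × Fin m) ℝ :=
  fun i b => (A ^ (t - 1 - (b.1 : ℕ)) * B) i b.2

section Aux

variable {p q : Type*} [Fintype p] [Fintype q] [DecidableEq p] [DecidableEq q]

lemma aux_posdef (N : Matrix p q ℝ) : (1 + N * Nᵀ).PosDef := by
  have h : (N * Nᵀ).PosSemidef := by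
    simpa [conjTranspose_eq_transpose_of_trivial] using posSemidef_self_mul_conjTranspose N
  exact Matrix.PosDef.add_posSemidef Matrix.PosDef.one h

lemma aux_psd {ni : ℕ} (M : Matrix p (Fin ni) ℝ) (N : Matrix p q ℝ) :
    (Mᵀ * (1 + N * Nᵀ)⁻¹ * M).PosSemidef := by
  have := ((aux_posdef N).inv).posSemidef.conjTranspose_mul_mul_same M
  simpa [conjTranspose_eq_transpose_of_trivial] using this

/-- invariance of the quadratic-form expression under simultaneous reindexing. -/
lemma aux_reindex {ni : ℕ} {p' q' : Type*} [Fintype p'] [Fintype q'] [DecidableEq p']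
    [DecidableEq q'] (M : Matrix p (Fin ni) ℝ) (N : Matrix p q ℝ) (e : p' ≃ p) (f : q' ≃ q) :
    (M.submatrix e id)ᵀ *
      (1 + (N.submatrix e f) * (N.submatrix e f)ᵀ)⁻¹ * (M.submatrix e id)
      = Mᵀ * (1 + N * Nᵀ)⁻¹ * M := by
  have h1 : (N.submatrix e f) * (N.submatrix e f)ᵀ = (N * Nᵀ).submatrix e e := by
    rw [transpose_submatrix, submatrix_mul_equiv]
  have h2 : (1 : Matrix p' p' ℝ) + (N * Nᵀ).submatrix e e = (1 + N * Nᵀ).submatrix e e := by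
    simp [Matrix.submatrix_add, Matrix.submatrix_one_equiv]
  rw [h1, h2, inv_submatrix_equiv, transpose_submatrix]
  calc ((Matrix.transpose M).submatrix id ⇑e * (1 + N * Matrix.transpose N)⁻¹.submatrix ⇑e ⇑e : Matrix (Fin ni) p' ℝ) * M.submatrix (⇑e) id
      = ((Matrix.transpose M * (1 + N * Matrix.transpose N)⁻¹ : Matrix (Fin ni) p ℝ)).submatrix id ⇑e * M.submatrix (⇑e) id := by
        exact congrArg (· * M.submatrix (⇑e) id) (submatrix_mul_equiv _ _ id e e)
    _ = ((Matrix.transpose M * (1 + N * Matrix.transpose N)⁻¹ : Matrix (Fin ni) p ℝ) * M : Matrix (Fin ni) (Fin ni) ℝ).submatrix id id := by rw [submatrix_mul_equiv]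
    _ = _ := submatrix_id_id _

/-- One step of the Riccati recursion in abstract closed form. -/
lemma aux_step {ni mi li : ℕ} (A : Matrix (Fin ni) (Fin ni) ℝ) (B : Matrix (Fin ni) (Fin mi) ℝ)
    (C : Matrix (Fin li) (Fin ni) ℝ) (M : Matrix p (Fin ni) ℝ) (N : Matrix p q ℝ) :
    Cᵀ * C + Aᵀ * (Mᵀ * (1 + N * Nᵀ)⁻¹ * M) *
        (1 + B * Bᵀ * (Mᵀ * (1 + N * Nᵀ)⁻¹ * M))⁻¹ * A
      = (Matrix.transpose (fromRows C (M * A))) *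
          (1 + (fromBlocks (0 : Matrix (Fin li) (Fin mi) ℝ) 0 (M * B) N) * Matrix.transpose (fromBlocks (0 : Matrix (Fin li) (Fin mi) ℝ) 0 (M * B) N))⁻¹ *
          fromRows C (M * A) := by
  set P : Matrix p p ℝ := 1 + N * Nᵀ with hPdef
  have hP : P.PosDef := aux_posdef N
  set X : Matrix (Fin ni) (Fin ni) ℝ := Mᵀ * P⁻¹ * M with hXdef
  have hXpsd : X.PosSemidef := aux_psd M N
  set Q : Matrix p p ℝ := P + M * B * Bᵀ * Mᵀ with hQdef
  have hQ : Q.PosDef := by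
    apply hP.add_posSemidef
    have h : M * B * Bᵀ * Mᵀ = (M * B) * (M * B)ᵀ := by
      rw [transpose_mul, Matrix.mul_assoc]
    rw [h]
    simpa [conjTranspose_eq_transpose_of_trivial] using
      posSemidef_self_mul_conjTranspose (M * B)
  have hPP' : P * P⁻¹ = 1 := mul_nonsing_inv P ((isUnit_iff_isUnit_det _).mp hP.isUnit)
  have hQQ : Q⁻¹ * Q = 1 := nonsing_inv_mul Q ((isUnit_iff_isUnit_det _).mp hQ.isUnit)
  -- invertibility of D = 1 + B Bᵀ X
  have hDdet : IsUnit (1 + B * Bᵀ * X).det := by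
    have h1 : (1 + B * Bᵀ * X).det = (1 + Bᵀ * X * B).det := by
      rw [Matrix.mul_assoc, det_one_add_mul_comm]
    have h2 : (1 + Bᵀ * X * B).PosDef := by
      apply Matrix.PosDef.one.add_posSemidef
      simpa [conjTranspose_eq_transpose_of_trivial] using
        hXpsd.conjTranspose_mul_mul_same B
    rw [h1]
    exact h2.det_pos.ne'.isUnit
  have hDD : (1 + B * Bᵀ * X) * (1 + B * Bᵀ * X)⁻¹ = 1 := mul_nonsing_inv _ hDdet
  -- key identity
  have hkey : X * (1 + B * Bᵀ * X)⁻¹ = Mᵀ * Q⁻¹ * M := by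
    have hc : Mᵀ * Q⁻¹ * M * (1 + B * Bᵀ * X) = X := by
      have h4 : Q * (P⁻¹ * M) = M + M * B * Bᵀ * Mᵀ * P⁻¹ * M := by
        rw [hQdef, Matrix.add_mul, ← Matrix.mul_assoc P, hPP', Matrix.one_mul]
        simp [Matrix.mul_assoc]
      calc Mᵀ * Q⁻¹ * M * (1 + B * Bᵀ * X)
          = Mᵀ * Q⁻¹ * (M + M * B * Bᵀ * Mᵀ * P⁻¹ * M) := by
            rw [hXdef]; simp [Matrix.mul_add, Matrix.mul_assoc]
        _ = Mᵀ * Q⁻¹ * (Q * (P⁻¹ * M)) := by rw [h4]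
        _ = Mᵀ * (Q⁻¹ * Q * (P⁻¹ * M)) := by simp [Matrix.mul_assoc]
        _ = X := by rw [hQQ, Matrix.one_mul, hXdef, Matrix.mul_assoc]
    have h5 := congrArg (fun Z => Z * (1 + B * Bᵀ * X)⁻¹) hc
    rw [Matrix.mul_assoc (Mᵀ * Q⁻¹ * M), hDD, Matrix.mul_one] at h5
    exact h5.symm
  -- block structure of the RHS
  have hblock : (1 : Matrix (Fin li ⊕ p) (Fin li ⊕ p) ℝ) +
      (fromBlocks 0 0 (M * B) N) * (fromBlocks 0 0 (M * B) N)ᵀ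
      = fromBlocks 1 0 0 Q := by
    rw [fromBlocks_transpose, fromBlocks_multiply, ← fromBlocks_one, fromBlocks_add]
    simp only [Matrix.mul_zero, Matrix.zero_mul, add_zero, zero_add, transpose_zero]
    congr 1
    rw [hQdef, hPdef]
    simp [transpose_mul, Matrix.mul_assoc, add_comm, add_assoc, add_left_comm]
  have hbinv : (fromBlocks (1 : Matrix (Fin li) (Fin li) ℝ) 0 0 Q)⁻¹
      = fromBlocks 1 0 0 Q⁻¹ := by
    apply inv_eq_right_inv
    rw [fromBlocks_multiply]
    simp [mul_nonsing_inv Q ((isUnit_iff_isUnit_det _).mp hQ.isUnit), fromBlocks_one]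
  rw [hblock, hbinv, transpose_fromRows, fromCols_mul_fromBlocks,
      fromCols_mul_fromRows]
  simp only [Matrix.mul_zero, Matrix.zero_mul, add_zero, zero_add, Matrix.mul_one]
  rw [transpose_mul, Matrix.mul_assoc Aᵀ X, hkey]
  simp [Matrix.mul_assoc]

end Aux


section Equivs

/-- Row reindexing equivalence for the induction step. -/
def eRow (t l r : ℕ) : ((Fin (t+1) × Fin l) ⊕ Fin r) ≃ (Fin l ⊕ ((Fin t × Fin l) ⊕ Fin r)) where
  toFun x :=
    match x with
    | .inl ic => Fin.cases (Sum.inl ic.2) (fun i' => Sum.inr (Sum.inl (i', ic.2))) ic.1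
    | .inr j => Sum.inr (Sum.inr j)
  invFun y :=
    match y with
    | .inl c => .inl (0, c)
    | .inr (.inl ic) => .inl (ic.1.succ, ic.2)
    | .inr (.inr j) => .inr j
  left_inv x := by
    rcases x with ⟨i, c⟩ | j
    · induction i using Fin.cases <;> simp
    · rfl
  right_inv y := by
    rcases y with c | (⟨i, c⟩ | j) <;> simp

/-- Column reindexing equivalence for the induction step. -/
def eCol (t m : ℕ) : (Fin (t+1) × Fin m) ≃ (Fin m ⊕ (Fin t × Fin m)) where
  toFun x := Fin.cases (Sum.inl x.2) (fun i' => Sum.inr (i', x.2)) x.1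
  invFun y :=
    match y with
    | .inl j => (0, j)
    | .inr bj => (bj.1.succ, bj.2)
  left_inv x := by
    obtain ⟨i, c⟩ := x
    induction i using Fin.cases <;> simp
  right_inv y := by
    rcases y with j | ⟨b, j⟩ <;> simp

@[simp] lemma eRow_inl_zero (t l r : ℕ) (c : Fin l) :
    eRow t l r (Sum.inl (0, c)) = Sum.inl c := by simp [eRow]

@[simp] lemma eRow_inl_succ (t l r : ℕ) (i : Fin t) (c : Fin l) :
    eRow t l r (Sum.inl (i.succ, c)) = Sum.inr (Sum.inl (i, c)) := by simp [eRow]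

@[simp] lemma eRow_inr (t l r : ℕ) (j : Fin r) :
    eRow t l r (Sum.inr j) = Sum.inr (Sum.inr j) := rfl

@[simp] lemma eCol_zero (t m : ℕ) (j : Fin m) :
    eCol t m (0, j) = Sum.inl j := by simp [eCol]

@[simp] lemma eCol_succ (t m : ℕ) (b : Fin t) (j : Fin m) :
    eCol t m (b.succ, j) = Sum.inr (b, j) := by simp [eCol]

end Equivs

theorem stmt_11 {n m l r : ℕ}
    (A : Matrix (Fin n) (Fin n) ℝ) (B : Matrix (Fin n) (Fin m) ℝ)
    (C : Matrix (Fin l) (Fin n) ℝ) (Γ : Matrix (Fin r) (Fin n) ℝ)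
    (X : ℕ → Matrix (Fin n) (Fin n) ℝ)
    (hX0 : X 0 = Γᵀ * Γ)
    (hXrec : ∀ t, X (t + 1) = Cᵀ * C + Aᵀ * X t * (1 + B * Bᵀ * X t)⁻¹ * A) :
    ∀ t, 1 ≤ t →
      X t = (fromRows (obsMat A C t) (Γ * A ^ t))ᵀ *
        (1 + (fromRows (toepMat A B C t) (Γ * ctrbMat A B t)) *
          (fromRows (toepMat A B C t) (Γ * ctrbMat A B t))ᵀ)⁻¹ *
        fromRows (obsMat A C t) (Γ * A ^ t) := by
  have main : ∀ t, X t = (fromRows (obsMat A C t) (Γ * A ^ t))ᵀ *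
      (1 + (fromRows (toepMat A B C t) (Γ * ctrbMat A B t)) *
        (fromRows (toepMat A B C t) (Γ * ctrbMat A B t))ᵀ)⁻¹ *
      fromRows (obsMat A C t) (Γ * A ^ t) := by
    intro t
    induction t with
    | zero =>
      rw [hX0]
      have hN : (fromRows (toepMat A B C 0) (Γ * ctrbMat A B 0)) *
          (fromRows (toepMat A B C 0) (Γ * ctrbMat A B 0))ᵀ = 0 := by
        ext x y
        simp [Matrix.mul_apply]
      rw [hN, add_zero, inv_one, Matrix.mul_one]
      ext i j
      simp [Matrix.mul_apply, Fintype.sum_sum_type, obsMat]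
    | succ t ih =>
      have hM : fromRows (obsMat A C (t+1)) (Γ * A ^ (t+1))
          = (fromRows C (fromRows (obsMat A C t) (Γ * A ^ t) * A)).submatrix
              (eRow t l r) id := by
        ext x j
        rcases x with ⟨i, c⟩ | k
        · induction i using Fin.cases with
          | zero =>
            simp [obsMat, submatrix_apply]
          | succ i' =>
            simp only [submatrix_apply, eRow_inl_succ, id_eq, fromRows_mul,
              fromRows_apply_inr, fromRows_apply_inl]
            have h1 : (obsMat A C t * A) (i', c) j = (C * A ^ (i' : ℕ) * A) c j := by
              simp [obsMat, Matrix.mul_apply]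
            rw [h1]
            simp [obsMat, Fin.val_succ, pow_succ, ← Matrix.mul_assoc]
        · simp [submatrix_apply, pow_succ, Matrix.mul_assoc, Matrix.mul_apply]
      have hN : fromRows (toepMat A B C (t+1)) (Γ * ctrbMat A B (t+1))
          = (fromBlocks 0 0 (fromRows (obsMat A C t) (Γ * A ^ t) * B)
              (fromRows (toepMat A B C t) (Γ * ctrbMat A B t))).submatrix
              (eRow t l r) (eCol t m) := by
        ext x b
        obtain ⟨bi, bj⟩ := b
        rcases x with ⟨i, c⟩ | k
        · induction i using Fin.cases with
          | zero =>
            induction bi using Fin.cases with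
            | zero => simp [toepMat, submatrix_apply]
            | succ bi' => simp [toepMat, submatrix_apply]
          | succ i' =>
            induction bi using Fin.cases with
            | zero =>
              simp [toepMat, submatrix_apply, obsMat, Matrix.mul_apply]
            | succ bi' =>
              simp only [submatrix_apply, eRow_inl_succ, eCol_succ, fromBlocks_apply₂₂,
                fromRows_apply_inl, fromRows_apply_inl, toepMat]
              simp [toepMat, Nat.succ_sub_succ]
        · induction bi using Fin.cases with
          | zero =>
            simp [ctrbMat, submatrix_apply, Matrix.mul_apply, Matrix.mul_assoc]
          | succ bi' =>
            have harith : t - ((bi' : ℕ) + 1) = t - 1 - (bi' : ℕ) := by omega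
            simp [ctrbMat, submatrix_apply, Matrix.mul_apply, Fin.val_succ, harith]
      rw [hXrec t, ih, aux_step A B C (fromRows (obsMat A C t) (Γ * A ^ t))
            (fromRows (toepMat A B C t) (Γ * ctrbMat A B t)),
          hM, hN, aux_reindex]
  intro t _
  exact main t
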